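/- The sliced maximal operator N_p defined by N_p f(x) = sup_{u ∈ 𝕊^{d−1}} ( (1/δ) ∫_{S^δ(0)} |f(x+u+y)|^p d(y,z) )^{1/p} is bounded on L^p(ℝ^d) with operator norm bounded uniformly in δ ∈ (0,1/2), for every 1 ≤ p < ∞. -/

import Mathlib

open MeasureTheory Metric
open scoped ENNReal NNReal

noncomputable section

/-- First ℝ^d-component of a vector in ℝ^{2d}. -/
def fstPart {d : ℕ} (w : EuclideanSpace ℝ (Fin d ⊕ Fin d)) : EuclideanSpace ℝ (Fin d) :=
  WithLp.toLp 2 (fun i => w (Sum.inl i))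

/-- The δ-neighborhood S^δ(0) of the unit sphere in ℝ^{2d}. -/
def annulus2 (d : ℕ) (δ : ℝ) : Set (EuclideanSpace ℝ (Fin d ⊕ Fin d)) :=
  {w | 1 - δ < ‖w‖ ∧ ‖w‖ < 1 + δ}

/-- The sliced maximal operator
`N_p f(x) = sup_{u ∈ 𝕊^{d−1}} ((1/δ) ∫_{S^δ(0)} |f(x+u+y)|^p d(y,z))^{1/p}`. -/
def slicedMax {d : ℕ} (δ : ℝ) (p : ℝ) (f : EuclideanSpace ℝ (Fin d) → ℝ)
    (x : EuclideanSpace ℝ (Fin d)) : ℝ≥0∞ :=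
  ⨆ u ∈ sphere (0 : EuclideanSpace ℝ (Fin d)) 1,
    ((ENNReal.ofReal δ)⁻¹ *
      ∫⁻ w in annulus2 d δ, (‖f (x + u + fstPart w)‖₊ : ℝ≥0∞) ^ p) ^ (1 / p)

namespace Stmt8Aux

/-- Splitting ℝ^{2d} as a measure-preserving product of two copies of ℝ^d. -/
def splitEquiv (d : ℕ) :
    (EuclideanSpace ℝ (Fin d) × EuclideanSpace ℝ (Fin d)) ≃ᵐ EuclideanSpace ℝ (Fin d ⊕ Fin d) :=
  ((MeasurableEquiv.prodCongr (MeasurableEquiv.toLp 2 (Fin d → ℝ)).symm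
      (MeasurableEquiv.toLp 2 (Fin d → ℝ)).symm).trans
    (MeasurableEquiv.sumPiEquivProdPi (fun _ : Fin d ⊕ Fin d => ℝ)).symm).trans
    (MeasurableEquiv.toLp 2 (Fin d ⊕ Fin d → ℝ)).symm.symm

lemma splitEquiv_measurePreserving (d : ℕ) :
    MeasurePreserving (splitEquiv d) volume volume := by
  have h1 := EuclideanSpace.volume_preserving_symm_measurableEquiv_toLp (Fin d)
  exact ((h1.prod h1).trans
    (volume_measurePreserving_sumPiEquivProdPi_symm (fun _ : Fin d ⊕ Fin d => ℝ))).trans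
    (EuclideanSpace.volume_preserving_symm_measurableEquiv_toLp (Fin d ⊕ Fin d)).symm

lemma fstPart_splitEquiv {d : ℕ} (q : EuclideanSpace ℝ (Fin d) × EuclideanSpace ℝ (Fin d)) :
    fstPart (splitEquiv d q) = q.1 := rfl

lemma measurable_fstPart {d : ℕ} : Measurable (fstPart (d := d)) := by
  have h : fstPart (d := d) = fun w => ((splitEquiv d).symm w).1 := by
    funext w
    conv_lhs => rw [← (splitEquiv d).apply_symm_apply w]
    rw [fstPart_splitEquiv]
  rw [h]
  exact measurable_fst.comp (splitEquiv d).symm.measurable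

lemma norm_splitEquiv {d : ℕ} (q : EuclideanSpace ℝ (Fin d) × EuclideanSpace ℝ (Fin d)) :
    ‖splitEquiv d q‖ = Real.sqrt (‖q.1‖ ^ 2 + ‖q.2‖ ^ 2) := by
  rw [EuclideanSpace.norm_eq]
  congr 1
  rw [Fintype.sum_sum_type]
  have h1 : ‖q.1‖ ^ 2 = ∑ i, ‖q.1 i‖ ^ 2 := by
    rw [EuclideanSpace.norm_eq, Real.sq_sqrt (by positivity)]
  have h2 : ‖q.2‖ ^ 2 = ∑ i, ‖q.2 i‖ ^ 2 := by
    rw [EuclideanSpace.norm_eq, Real.sq_sqrt (by positivity)]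
  rw [h1, h2]
  rfl

/-- The slice of the annulus over a fixed first coordinate `y`. -/
def slice (d : ℕ) (δ : ℝ) (y : EuclideanSpace ℝ (Fin d)) : Set (EuclideanSpace ℝ (Fin d)) :=
  {z | 1 - δ < Real.sqrt (‖y‖ ^ 2 + ‖z‖ ^ 2) ∧ Real.sqrt (‖y‖ ^ 2 + ‖z‖ ^ 2) < 1 + δ}

lemma measurableSet_annulus2 (d : ℕ) (δ : ℝ) : MeasurableSet (annulus2 d δ) := by
  have : annulus2 d δ = {w | 1 - δ < ‖w‖} ∩ {w | ‖w‖ < 1 + δ} := rfl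
  rw [this]
  exact ((isOpen_lt continuous_const continuous_norm).inter
    (isOpen_lt continuous_norm continuous_const)).measurableSet

lemma measurableSet_slice (d : ℕ) (δ : ℝ) (y : EuclideanSpace ℝ (Fin d)) :
    MeasurableSet (slice d δ y) := by
  have hc : Continuous fun z : EuclideanSpace ℝ (Fin d) =>
      Real.sqrt (‖y‖ ^ 2 + ‖z‖ ^ 2) :=
    (continuous_const.add ((continuous_norm).pow 2)).sqrt
  exact ((isOpen_lt continuous_const hc).inter (isOpen_lt hc continuous_const)).measurableSet

/-- Fubini: integrating a function of the first component over the annulus. -/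
lemma key {d : ℕ} (δ : ℝ) (g : EuclideanSpace ℝ (Fin d) → ℝ≥0∞) (hg : Measurable g) :
    ∫⁻ w in annulus2 d δ, g (fstPart w) ∂volume
      = ∫⁻ y, g y * volume (slice d δ y) ∂volume := by
  have hmp := splitEquiv_measurePreserving d
  have hemb := (splitEquiv d).measurableEmbedding
  rw [← hmp.setLIntegral_comp_preimage_emb hemb (fun w => g (fstPart w)) (annulus2 d δ)]
  have hpre : (splitEquiv d) ⁻¹' (annulus2 d δ)
      = {q : EuclideanSpace ℝ (Fin d) × EuclideanSpace ℝ (Fin d) | q.2 ∈ slice d δ q.1} := by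
    ext q
    simp only [Set.mem_preimage, annulus2, Set.mem_setOf_eq, norm_splitEquiv, slice]
  have hS : MeasurableSet ((splitEquiv d) ⁻¹' (annulus2 d δ)) :=
    (splitEquiv d).measurable (measurableSet_annulus2 d δ)
  have hint : ∀ q : EuclideanSpace ℝ (Fin d) × EuclideanSpace ℝ (Fin d),
      g (fstPart (splitEquiv d q)) = g q.1 := fun q => by rw [fstPart_splitEquiv]
  calc ∫⁻ q in (splitEquiv d) ⁻¹' (annulus2 d δ), g (fstPart (splitEquiv d q)) ∂volume
      = ∫⁻ q, ((splitEquiv d) ⁻¹' (annulus2 d δ)).indicator (fun q => g q.1) q ∂volume := by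
        rw [lintegral_indicator hS]
        exact setLIntegral_congr_fun hS (fun q _ => hint q)
    _ = ∫⁻ y, ∫⁻ z, ((splitEquiv d) ⁻¹' (annulus2 d δ)).indicator
          (fun q => g q.1) (y, z) ∂volume ∂volume := by
        rw [MeasureTheory.Measure.volume_eq_prod]
        exact lintegral_prod _ ((hg.comp measurable_fst).indicator hS).aemeasurable
    _ = ∫⁻ y, g y * volume (slice d δ y) ∂volume := by
        refine lintegral_congr fun y => ?_
        have : ∀ z, ((splitEquiv d) ⁻¹' (annulus2 d δ)).indicator (fun q => g q.1) (y, z)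
            = (slice d δ y).indicator (fun _ => g y) z := by
          intro z
          by_cases hz : z ∈ slice d δ y
          · have : (y, z) ∈ (splitEquiv d) ⁻¹' (annulus2 d δ) := by rw [hpre]; exact hz
            simp [Set.indicator_of_mem this, Set.indicator_of_mem hz]
          · have : (y, z) ∉ (splitEquiv d) ⁻¹' (annulus2 d δ) := by rw [hpre]; exact hz
            simp [Set.indicator_of_notMem this, Set.indicator_of_notMem hz]
        simp_rw [this]
        rw [lintegral_indicator (measurableSet_slice d δ y), setLIntegral_const]

/-- Elementary inequality used for the slice volume bound, `d ≥ 2`. -/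
lemma pow_diff_le {d : ℕ} {a b δ : ℝ} (hd : 2 ≤ d) (hb : 0 ≤ b) (hba : b ≤ a) (ha : a ≤ 2)
    (h4 : a * (a - b) ≤ 4 * δ) : a ^ d - b ^ d ≤ (d : ℝ) * 2 ^ d * δ := by
  obtain ⟨k, rfl⟩ : ∃ k, d = k + 2 := ⟨d - 2, by omega⟩
  have ha0 : 0 ≤ a := hb.trans hba
  have hab : 0 ≤ a - b := sub_nonneg.2 hba
  have hδ0 : 0 ≤ 4 * δ := le_trans (by positivity) h4
  have hsum : (∑ i ∈ Finset.range (k + 2), a ^ i * b ^ (k + 2 - 1 - i))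
      ≤ (k + 2 : ℝ) * a ^ (k + 1) := by
    have : ∀ i ∈ Finset.range (k + 2), a ^ i * b ^ (k + 2 - 1 - i) ≤ a ^ (k + 1) := by
      intro i hi
      have hik : i ≤ k + 1 := by
        have := Finset.mem_range.mp hi; omega
      calc a ^ i * b ^ (k + 2 - 1 - i) ≤ a ^ i * a ^ (k + 2 - 1 - i) := by
            exact mul_le_mul_of_nonneg_left (pow_le_pow_left₀ hb hba _) (by positivity)
        _ = a ^ (i + (k + 2 - 1 - i)) := (pow_add a i _).symm
        _ = a ^ (k + 1) := by congr 1; omega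
    calc (∑ i ∈ Finset.range (k + 2), a ^ i * b ^ (k + 2 - 1 - i))
        ≤ ∑ _i ∈ Finset.range (k + 2), a ^ (k + 1) := Finset.sum_le_sum this
      _ = (k + 2 : ℝ) * a ^ (k + 1) := by
          rw [Finset.sum_const, Finset.card_range]; push_cast; ring
  have hgeom := geom_sum₂_mul a b (k + 2)
  have hk2 : (0 : ℝ) ≤ (k + 2 : ℝ) := by positivity
  calc a ^ (k + 2) - b ^ (k + 2)
      = (∑ i ∈ Finset.range (k + 2), a ^ i * b ^ (k + 2 - 1 - i)) * (a - b) := hgeom.symm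
    _ ≤ ((k + 2 : ℝ) * a ^ (k + 1)) * (a - b) := mul_le_mul_of_nonneg_right hsum hab
    _ = (k + 2 : ℝ) * a ^ k * (a * (a - b)) := by ring
    _ ≤ (k + 2 : ℝ) * 2 ^ k * (4 * δ) := by
        have h1 : a ^ k ≤ 2 ^ k := pow_le_pow_left₀ ha0 ha k
        have h2 : (0:ℝ) ≤ a ^ k := by positivity
        have h3 : (0:ℝ) ≤ a * (a - b) := mul_nonneg ha0 hab
        nlinarith [mul_le_mul_of_nonneg_left h4 (mul_nonneg hk2 h2),
          mul_le_mul_of_nonneg_right (mul_le_mul_of_nonneg_left h1 hk2) hδ0]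
    _ = ((k + 2 : ℕ) : ℝ) * 2 ^ (k + 2) * δ := by push_cast; ring

lemma slice_empty {d : ℕ} {δ : ℝ} (hδ : 0 < δ) (hδ' : δ < 1 / 2) {y : EuclideanSpace ℝ (Fin d)}
    (hy : 2 ≤ ‖y‖) : slice d δ y = ∅ := by
  ext z
  simp only [slice, Set.mem_setOf_eq, Set.mem_empty_iff_false, iff_false, not_and]
  intro _
  have h1 : (1 + δ) ^ 2 ≤ ‖y‖ ^ 2 + ‖z‖ ^ 2 := by
    have h3 : (1 + δ) ^ 2 ≤ 4 := by nlinarith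
    have h2 : (4 : ℝ) ≤ ‖y‖ ^ 2 := by nlinarith
    nlinarith [sq_nonneg ‖z‖]
  intro hlt
  have := (Real.sqrt_lt' (by linarith : (0:ℝ) < 1 + δ)).mp hlt
  linarith

lemma slice_bound {d : ℕ} (hd2 : 2 ≤ d) {δ : ℝ} (hδ : 0 < δ) (hδ' : δ < 1 / 2)
    (y : EuclideanSpace ℝ (Fin d)) :
    volume (slice d δ y)
      ≤ ENNReal.ofReal ((d : ℝ) * 2 ^ d * δ) * volume (ball (0 : EuclideanSpace ℝ (Fin d)) 1) := by
  haveI : Nonempty (Fin d) := ⟨⟨0, by omega⟩⟩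
  haveI : Nontrivial (EuclideanSpace ℝ (Fin d)) := by infer_instance
  set s : ℝ := ‖y‖ ^ 2 with hs
  have hs0 : 0 ≤ s := by positivity
  set a : ℝ := Real.sqrt (max 0 ((1 + δ) ^ 2 - s)) with hadef
  set b : ℝ := Real.sqrt (max 0 ((1 - δ) ^ 2 - s)) with hbdef
  have ha0 : 0 ≤ a := Real.sqrt_nonneg _
  have hb0 : 0 ≤ b := Real.sqrt_nonneg _
  have hasq : a ^ 2 = max 0 ((1 + δ) ^ 2 - s) := Real.sq_sqrt (le_max_left _ _)
  have hbsq : b ^ 2 = max 0 ((1 - δ) ^ 2 - s) := Real.sq_sqrt (le_max_left _ _)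
  have hba : b ≤ a := by
    apply Real.sqrt_le_sqrt
    apply max_le_max le_rfl
    nlinarith
  have ha2 : a ≤ 2 := by
    have h1 : max 0 ((1 + δ) ^ 2 - s) ≤ 4 := by
      apply max_le (by norm_num)
      nlinarith
    calc a ≤ Real.sqrt 4 := Real.sqrt_le_sqrt h1
      _ = 2 := by
        rw [show (4:ℝ) = 2 ^ 2 by norm_num, Real.sqrt_sq (by norm_num)]
  have hsub : slice d δ y ⊆ ball (0 : EuclideanSpace ℝ (Fin d)) a \ ball 0 b := by
    intro z hz
    obtain ⟨hz1, hz2⟩ := hz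
    have hz2' : s + ‖z‖ ^ 2 < (1 + δ) ^ 2 :=
      (Real.sqrt_lt' (by linarith)).mp hz2
    constructor
    · rw [mem_ball_zero_iff]
      have : ‖z‖ ^ 2 < max 0 ((1 + δ) ^ 2 - s) := le_max_right _ _ |>.trans_lt' (by linarith)
      exact (Real.lt_sqrt (norm_nonneg z)).mpr (lt_of_lt_of_le (by linarith) (le_max_right _ _))
    · have hble : b ≤ ‖z‖ := by
        rcases le_or_gt ((1 - δ) ^ 2) s with hcase | hcase
        · have hb00 : b = 0 := by
            rw [hbdef, max_eq_left (by linarith), Real.sqrt_zero]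
          rw [hb00]; exact norm_nonneg z
        · have h1δ : (0:ℝ) ≤ 1 - δ := by linarith
          have := (Real.lt_sqrt h1δ).mp hz1
          have hzsq : (1 - δ) ^ 2 - s < ‖z‖ ^ 2 := by linarith
          have hblt : b < ‖z‖ := by
            rw [hbdef]
            have h2 : max 0 ((1 - δ) ^ 2 - s) < ‖z‖ ^ 2 :=
              max_lt (by nlinarith) hzsq
            calc Real.sqrt (max 0 ((1 - δ) ^ 2 - s)) < Real.sqrt (‖z‖ ^ 2) :=
                  Real.sqrt_lt_sqrt (le_max_left _ _) h2
              _ = ‖z‖ := Real.sqrt_sq (norm_nonneg z)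
          exact hblt.le
      exact fun hzb => absurd (mem_ball_zero_iff.mp hzb) (not_lt.mpr hble)
  have hfin : volume (ball (0 : EuclideanSpace ℝ (Fin d)) b) ≠ ⊤ := measure_ball_lt_top.ne
  have hfind : Module.finrank ℝ (EuclideanSpace ℝ (Fin d)) = d := by
    rw [finrank_euclideanSpace, Fintype.card_fin]
  have hvol : volume (slice d δ y)
      ≤ ENNReal.ofReal (a ^ d) * volume (ball (0 : EuclideanSpace ℝ (Fin d)) 1)
        - ENNReal.ofReal (b ^ d) * volume (ball (0 : EuclideanSpace ℝ (Fin d)) 1) := by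
    calc volume (slice d δ y) ≤ volume (ball (0 : EuclideanSpace ℝ (Fin d)) a \ ball 0 b) :=
          measure_mono hsub
      _ = volume (ball (0 : EuclideanSpace ℝ (Fin d)) a) - volume (ball 0 b) :=
          measure_diff (ball_subset_ball hba) measurableSet_ball.nullMeasurableSet hfin
      _ = _ := by
          rw [Measure.addHaar_ball _ _ ha0, Measure.addHaar_ball _ _ hb0, hfind]
  refine hvol.trans ?_
  rw [← ENNReal.sub_mul (fun _ _ => measure_ball_lt_top.ne)]
  apply mul_le_mul_left
  rw [← ENNReal.ofReal_sub _ (by positivity)]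
  apply ENNReal.ofReal_le_ofReal
  apply pow_diff_le hd2 hb0 hba ha2
  have hdiff : a ^ 2 ≤ b ^ 2 + 4 * δ := by
    rw [hasq, hbsq]
    apply max_le
    · positivity
    · have : (1 + δ) ^ 2 - s = ((1 - δ) ^ 2 - s) + 4 * δ := by ring
      rw [this]
      exact add_le_add_left (le_max_right _ _) _
  nlinarith [mul_le_mul_of_nonneg_right hba hb0]

/-- Generic Fubini/translation-invariance swap. -/
lemma swap_gen {d : ℕ} {β : Type*} [MeasureSpace β] [SigmaFinite (volume : Measure β)]
    (s : Set β) (hs : MeasurableSet s) (h : EuclideanSpace ℝ (Fin d) → ℝ≥0∞)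
    (hh : Measurable h) (T : β → EuclideanSpace ℝ (Fin d)) (hT : Measurable T) :
    ∫⁻ x : EuclideanSpace ℝ (Fin d), ∫⁻ w in s, h (x + T w) ∂volume ∂volume
      = volume s * ∫⁻ z, h z ∂volume := by
  have hΦ : Measurable (Function.uncurry fun (x : EuclideanSpace ℝ (Fin d)) (w : β) =>
      s.indicator (fun _ => (1 : ℝ≥0∞)) w * h (x + T w)) := by
    apply Measurable.mul
    · exact (measurable_const.indicator hs).comp measurable_snd
    · exact hh.comp (measurable_fst.add (hT.comp measurable_snd))
  calc ∫⁻ x : EuclideanSpace ℝ (Fin d), ∫⁻ w in s, h (x + T w) ∂volume ∂volume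
      = ∫⁻ x : EuclideanSpace ℝ (Fin d), ∫⁻ w,
          s.indicator (fun _ => (1 : ℝ≥0∞)) w * h (x + T w) ∂volume ∂volume := by
        refine lintegral_congr fun x => ?_
        rw [← lintegral_indicator hs]
        refine lintegral_congr fun w => ?_
        by_cases hw : w ∈ s <;> simp [hw]
    _ = ∫⁻ w, ∫⁻ x : EuclideanSpace ℝ (Fin d),
          s.indicator (fun _ => (1 : ℝ≥0∞)) w * h (x + T w) ∂volume ∂volume :=
        lintegral_lintegral_swap hΦ.aemeasurable
    _ = ∫⁻ w, s.indicator (fun _ => (1 : ℝ≥0∞)) w * ∫⁻ x, h (x + T w) ∂volume ∂volume := by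
        refine lintegral_congr fun w => ?_
        apply lintegral_const_mul'
        by_cases hw : w ∈ s <;> simp [hw]
    _ = ∫⁻ w, s.indicator (fun _ => (1 : ℝ≥0∞)) w * ∫⁻ z, h z ∂volume ∂volume := by
        refine lintegral_congr fun w => ?_
        rw [(measurePreserving_add_right volume (T w)).lintegral_comp hh]
    _ = (∫⁻ w, s.indicator (fun _ => (1 : ℝ≥0∞)) w ∂volume) * ∫⁻ z, h z ∂volume :=
        lintegral_mul_const _ (measurable_const.indicator hs)
    _ = volume s * ∫⁻ z, h z ∂volume := by
        rw [lintegral_indicator_const hs, one_mul]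

/-- The supremum trick: if every term is bounded by `M`, then `slicedMax ^ p ≤ M`. -/
lemma slicedMax_rpow_le {d : ℕ} {δ p : ℝ} (hp : 1 ≤ p)
    (f : EuclideanSpace ℝ (Fin d) → ℝ) (x : EuclideanSpace ℝ (Fin d)) (M : ℝ≥0∞)
    (hM : ∀ u ∈ sphere (0 : EuclideanSpace ℝ (Fin d)) 1,
      (ENNReal.ofReal δ)⁻¹ *
        (∫⁻ w in annulus2 d δ, (‖f (x + u + fstPart w)‖₊ : ℝ≥0∞) ^ p ∂volume) ≤ M) :
    slicedMax δ p f x ^ p ≤ M := by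
  have hp0 : p ≠ 0 := by positivity
  have h1 : slicedMax δ p f x ≤ M ^ (1 / p) := by
    unfold slicedMax
    exact iSup₂_le fun u hu => ENNReal.rpow_le_rpow (hM u hu) (by positivity)
  calc slicedMax δ p f x ^ p ≤ (M ^ (1 / p)) ^ p := ENNReal.rpow_le_rpow h1 (by linarith)
    _ = M := by rw [← ENNReal.rpow_mul, one_div, inv_mul_cancel₀ hp0, ENNReal.rpow_one]

/-- Common finishing step. -/
lemma finish {d : ℕ} {p : ℝ} (hp : 1 ≤ p) (L : ℝ≥0∞) (hL : L ≠ ⊤)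
    (H : ∀ δ : ℝ, 0 < δ → δ < 1 / 2 →
      ∀ f : EuclideanSpace ℝ (Fin d) → ℝ, Measurable f →
        (∫⁻ x, slicedMax δ p f x ^ p ∂volume)
          ≤ L * ∫⁻ v, (‖f v‖₊ : ℝ≥0∞) ^ p ∂volume) :
    ∃ C : ℝ≥0, 0 < C ∧ ∀ δ : ℝ, 0 < δ → δ < 1 / 2 →
      ∀ f : EuclideanSpace ℝ (Fin d) → ℝ, Measurable f →
        (∫⁻ x, slicedMax δ p f x ^ p) ^ (1 / p)
          ≤ C * eLpNorm f (ENNReal.ofReal p) volume := by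
  have hp0 : (0:ℝ) < p := by linarith
  refine ⟨1 + L.toNNReal, by positivity, fun δ hδ hδ' f hf => ?_⟩
  have hpne : ENNReal.ofReal p ≠ 0 := by
    simp only [ne_eq, ENNReal.ofReal_eq_zero, not_le]; linarith
  rw [eLpNorm_eq_lintegral_rpow_enorm_toReal hpne ENNReal.ofReal_ne_top,
    ENNReal.toReal_ofReal hp0.le]
  have hLC : L ≤ ((1 + L.toNNReal : ℝ≥0) : ℝ≥0∞) := by
    rw [← ENNReal.coe_toNNReal hL]
    exact ENNReal.coe_le_coe.mpr (le_add_self)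
  have hC1 : (1 : ℝ≥0∞) ≤ ((1 + L.toNNReal : ℝ≥0) : ℝ≥0∞) := by
    rw [← ENNReal.coe_one]
    exact ENNReal.coe_le_coe.mpr (self_le_add_right 1 L.toNNReal)
  calc (∫⁻ x, slicedMax δ p f x ^ p) ^ (1 / p)
      ≤ (L * ∫⁻ v, (‖f v‖₊ : ℝ≥0∞) ^ p ∂volume) ^ (1 / p) :=
        ENNReal.rpow_le_rpow (H δ hδ hδ' f hf) (by positivity)
    _ = L ^ (1 / p) * (∫⁻ v, (‖f v‖₊ : ℝ≥0∞) ^ p ∂volume) ^ (1 / p) :=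
        ENNReal.mul_rpow_of_nonneg _ _ (by positivity)
    _ ≤ ((1 + L.toNNReal : ℝ≥0) : ℝ≥0∞) ^ (1 / p)
          * (∫⁻ v, (‖f v‖₊ : ℝ≥0∞) ^ p ∂volume) ^ (1 / p) := by
        exact mul_le_mul_left (ENNReal.rpow_le_rpow hLC (by positivity)) _
    _ ≤ ((1 + L.toNNReal : ℝ≥0) : ℝ≥0∞) ^ (1:ℝ)
          * (∫⁻ v, (‖f v‖₊ : ℝ≥0∞) ^ p ∂volume) ^ (1 / p) := by
        apply mul_le_mul_left
        apply ENNReal.rpow_le_rpow_of_exponent_le hC1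
        rw [div_le_one hp0]; linarith
    _ = ((1 + L.toNNReal : ℝ≥0) : ℝ≥0∞)
          * (∫⁻ v, (‖f v‖₊ : ℝ≥0∞) ^ p ∂volume) ^ (1 / p) := by rw [ENNReal.rpow_one]

end Stmt8Aux

open Stmt8Aux

theorem stmt_8 {d : ℕ} (hd : 1 ≤ d) (p : ℝ) (hp : 1 ≤ p) :
    ∃ C : ℝ≥0, 0 < C ∧ ∀ δ : ℝ, 0 < δ → δ < 1 / 2 →
      ∀ f : EuclideanSpace ℝ (Fin d) → ℝ, Measurable f →
        (∫⁻ x, slicedMax δ p f x ^ p) ^ (1 / p)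
          ≤ C * eLpNorm f (ENNReal.ofReal p) volume := by
  have hd' : d = 1 ∨ 2 ≤ d := by omega
  rcases hd' with rfl | hd2
  · -- dimension 1 : the sphere has just two points
    set e : EuclideanSpace ℝ (Fin 1) := EuclideanSpace.single (0 : Fin 1) (1 : ℝ) with he
    have hnorme : ‖e‖ = 1 := by rw [he, EuclideanSpace.norm_single]; norm_num
    have hnormne : ‖-e‖ = 1 := by rw [norm_neg]; exact hnorme
    set c := volume (ball (0 : EuclideanSpace ℝ (Fin 1 ⊕ Fin 1)) 1) with hc
    refine finish hp (ENNReal.ofReal 8 * c)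
      (ENNReal.mul_ne_top ENNReal.ofReal_ne_top measure_ball_lt_top.ne) ?_
    intro δ hδ hδ' f hf
    have hδne : ENNReal.ofReal δ ≠ 0 := by
      simp only [ne_eq, ENNReal.ofReal_eq_zero, not_le]; exact hδ
    have hh : Measurable fun v : EuclideanSpace ℝ (Fin 1) => (‖f v‖₊ : ℝ≥0∞) ^ p := by fun_prop
    set I := ∫⁻ v, (‖f v‖₊ : ℝ≥0∞) ^ p ∂volume with hI
    set A : EuclideanSpace ℝ (Fin 1) → EuclideanSpace ℝ (Fin 1) → ℝ≥0∞ := fun u x =>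
      ∫⁻ w in annulus2 1 δ, (‖f (x + u + fstPart w)‖₊ : ℝ≥0∞) ^ p ∂volume with hAdef
    have hsphere : ∀ u ∈ sphere (0 : EuclideanSpace ℝ (Fin 1)) 1, u = e ∨ u = -e := by
      intro u hu
      have hu1 : ‖u‖ = 1 := mem_sphere_zero_iff_norm.mp hu
      have habs : |u 0| = 1 := by
        rw [EuclideanSpace.norm_eq] at hu1
        simpa [Fin.sum_univ_one, Real.sqrt_sq_eq_abs] using hu1
      have he0 : e 0 = 1 := by simp [he, EuclideanSpace.single_apply]
      rcases (abs_eq (by norm_num : (0:ℝ) ≤ 1)).mp habs with h | h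
      · left
        ext i
        have hi : i = 0 := Subsingleton.elim i 0
        rw [hi, h, he0]
      · right
        ext i
        have hi : i = 0 := Subsingleton.elim i 0
        have : (-e) 0 = -1 := by simp [he0]
        rw [hi, h, this]
    have hptx : ∀ x, slicedMax δ p f x ^ p
        ≤ (ENNReal.ofReal δ)⁻¹ * (A e x + A (-e) x) := by
      intro x
      apply slicedMax_rpow_le hp
      intro u hu
      rcases hsphere u hu with rfl | rfl
      · exact mul_le_mul_right le_self_add _
      · exact mul_le_mul_right le_add_self _
    have hAmeas : ∀ u : EuclideanSpace ℝ (Fin 1), Measurable (A u) := by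
      intro u
      have hrw : A u = fun x => ∫⁻ w, (annulus2 1 δ).indicator (fun _ => (1 : ℝ≥0∞)) w
          * (‖f (x + u + fstPart w)‖₊ : ℝ≥0∞) ^ p ∂volume := by
        funext x
        simp only [hAdef]
        rw [← lintegral_indicator (measurableSet_annulus2 1 δ)]
        refine lintegral_congr fun w => ?_
        by_cases hw : w ∈ annulus2 1 δ <;> simp [hw]
      rw [hrw]
      apply Measurable.lintegral_prod_right'
        (f := fun q : EuclideanSpace ℝ (Fin 1) × EuclideanSpace ℝ (Fin 1 ⊕ Fin 1) =>
          (annulus2 1 δ).indicator (fun _ => (1 : ℝ≥0∞)) q.2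
            * (‖f (q.1 + u + fstPart q.2)‖₊ : ℝ≥0∞) ^ p)
      apply Measurable.mul
      · exact (measurable_const.indicator (measurableSet_annulus2 1 δ)).comp measurable_snd
      · exact hh.comp ((measurable_fst.add_const u).add (measurable_fstPart.comp measurable_snd))
    have hAint : ∀ u : EuclideanSpace ℝ (Fin 1),
        (∫⁻ x, A u x ∂volume) = volume (annulus2 1 δ) * I := by
      intro u
      simp only [hAdef]
      have hassoc : ∀ (x : EuclideanSpace ℝ (Fin 1)) (w : EuclideanSpace ℝ (Fin 1 ⊕ Fin 1)),
          (‖f (x + u + fstPart w)‖₊ : ℝ≥0∞) ^ p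
            = (‖f (x + (u + fstPart w))‖₊ : ℝ≥0∞) ^ p := by
        intro x w; rw [add_assoc]
      simp_rw [hassoc]
      exact swap_gen (annulus2 1 δ) (measurableSet_annulus2 1 δ) _ hh
        (fun w => u + fstPart w) (measurable_const.add measurable_fstPart)
    have hannvol : volume (annulus2 1 δ) ≤ ENNReal.ofReal (4 * δ) * c := by
      have hsub : annulus2 1 δ
          ⊆ ball (0 : EuclideanSpace ℝ (Fin 1 ⊕ Fin 1)) (1 + δ) \ ball 0 (1 - δ) := by
        intro w hw
        obtain ⟨h1, h2⟩ := hw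
        exact ⟨mem_ball_zero_iff.mpr h2,
          fun hmem => absurd (mem_ball_zero_iff.mp hmem) (not_lt.mpr h1.le)⟩
      have hfind : Module.finrank ℝ (EuclideanSpace ℝ (Fin 1 ⊕ Fin 1)) = 2 := by
        rw [finrank_euclideanSpace]; simp
      calc volume (annulus2 1 δ)
          ≤ volume (ball (0 : EuclideanSpace ℝ (Fin 1 ⊕ Fin 1)) (1 + δ) \ ball 0 (1 - δ)) :=
            measure_mono hsub
        _ = volume (ball (0 : EuclideanSpace ℝ (Fin 1 ⊕ Fin 1)) (1 + δ))
              - volume (ball 0 (1 - δ)) :=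
            measure_diff (ball_subset_ball (by linarith))
              measurableSet_ball.nullMeasurableSet measure_ball_lt_top.ne
        _ = ENNReal.ofReal ((1 + δ) ^ 2) * c - ENNReal.ofReal ((1 - δ) ^ 2) * c := by
            rw [Measure.addHaar_ball _ _ (by linarith : (0:ℝ) ≤ 1 + δ),
              Measure.addHaar_ball _ _ (by linarith : (0:ℝ) ≤ 1 - δ), hfind]
        _ = ENNReal.ofReal ((1 + δ) ^ 2 - (1 - δ) ^ 2) * c := by
            rw [← ENNReal.sub_mul (fun _ _ => measure_ball_lt_top.ne),
              ← ENNReal.ofReal_sub _ (by positivity)]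
        _ = ENNReal.ofReal (4 * δ) * c := by
            rw [show (1 + δ) ^ 2 - (1 - δ) ^ 2 = 4 * δ by ring]
    calc ∫⁻ x, slicedMax δ p f x ^ p ∂volume
        ≤ ∫⁻ x, (ENNReal.ofReal δ)⁻¹ * (A e x + A (-e) x) ∂volume := lintegral_mono hptx
      _ = (ENNReal.ofReal δ)⁻¹ * ∫⁻ x, (A e x + A (-e) x) ∂volume :=
          lintegral_const_mul' _ _ (by simpa using hδne)
      _ = (ENNReal.ofReal δ)⁻¹
            * (volume (annulus2 1 δ) * I + volume (annulus2 1 δ) * I) := by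
          rw [lintegral_add_left (hAmeas e), hAint e, hAint (-e)]
      _ ≤ (ENNReal.ofReal δ)⁻¹
            * (ENNReal.ofReal (4 * δ) * c * I + ENNReal.ofReal (4 * δ) * c * I) := by
          apply mul_le_mul_right
          exact add_le_add (mul_le_mul_left hannvol I) (mul_le_mul_left hannvol I)
      _ = ENNReal.ofReal 8 * c * I := by
          have h4 : ENNReal.ofReal (4 * δ) = ENNReal.ofReal 4 * ENNReal.ofReal δ :=
            ENNReal.ofReal_mul (by norm_num)
          have hcan : (ENNReal.ofReal δ)⁻¹ * ENNReal.ofReal δ = 1 :=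
            ENNReal.inv_mul_cancel hδne ENNReal.ofReal_ne_top
          have h8 : ENNReal.ofReal (8:ℝ) = ENNReal.ofReal 4 + ENNReal.ofReal 4 := by
            rw [← ENNReal.ofReal_add] <;> norm_num
          rw [h4, h8]
          calc (ENNReal.ofReal δ)⁻¹
              * (ENNReal.ofReal 4 * ENNReal.ofReal δ * c * I
                + ENNReal.ofReal 4 * ENNReal.ofReal δ * c * I)
              = ((ENNReal.ofReal δ)⁻¹ * ENNReal.ofReal δ)
                  * ((ENNReal.ofReal 4 + ENNReal.ofReal 4) * c * I) := by ring
            _ = (ENNReal.ofReal 4 + ENNReal.ofReal 4) * c * I := by rw [hcan, one_mul]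
  · -- dimension ≥ 2 : uniform slice bound
    set c1 := volume (ball (0 : EuclideanSpace ℝ (Fin d)) 1) with hc1
    set c3 := volume (ball (0 : EuclideanSpace ℝ (Fin d)) 3) with hc3
    refine finish hp (ENNReal.ofReal ((d : ℝ) * 2 ^ d) * c1 * c3)
      (ENNReal.mul_ne_top (ENNReal.mul_ne_top ENNReal.ofReal_ne_top measure_ball_lt_top.ne)
        measure_ball_lt_top.ne) ?_
    intro δ hδ hδ' f hf
    have hδne : ENNReal.ofReal δ ≠ 0 := by
      simp only [ne_eq, ENNReal.ofReal_eq_zero, not_le]; exact hδ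
    have hh : Measurable fun v : EuclideanSpace ℝ (Fin d) => (‖f v‖₊ : ℝ≥0∞) ^ p := by fun_prop
    set I := ∫⁻ v, (‖f v‖₊ : ℝ≥0∞) ^ p ∂volume with hI
    have hpt : ∀ x, slicedMax δ p f x ^ p
        ≤ ENNReal.ofReal ((d : ℝ) * 2 ^ d) * c1 *
            ∫⁻ v in ball (0 : EuclideanSpace ℝ (Fin d)) 3,
              (‖f (x + v)‖₊ : ℝ≥0∞) ^ p ∂volume := by
      intro x
      apply slicedMax_rpow_le hp
      intro u hu
      have hu1 : ‖u‖ = 1 := mem_sphere_zero_iff_norm.mp hu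
      set g : EuclideanSpace ℝ (Fin d) → ℝ≥0∞ :=
        fun v => (‖f (x + u + v)‖₊ : ℝ≥0∞) ^ p with hg
      have hgm : Measurable g := by
        have : Measurable fun v : EuclideanSpace ℝ (Fin d) => x + u + v := by fun_prop
        exact hh.comp this
      have hA : (∫⁻ w in annulus2 d δ, (‖f (x + u + fstPart w)‖₊ : ℝ≥0∞) ^ p ∂volume)
          = ∫⁻ y, g y * volume (slice d δ y) ∂volume := key δ g hgm
      have hcore : (∫⁻ y, g y * volume (slice d δ y) ∂volume)
          ≤ ENNReal.ofReal ((d : ℝ) * 2 ^ d * δ) * c1 *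
              ∫⁻ v in ball (0 : EuclideanSpace ℝ (Fin d)) 3,
                (‖f (x + v)‖₊ : ℝ≥0∞) ^ p ∂volume := by
        calc (∫⁻ y, g y * volume (slice d δ y) ∂volume)
            ≤ ∫⁻ y, (ball (0 : EuclideanSpace ℝ (Fin d)) 2).indicator
                (fun y' => ENNReal.ofReal ((d : ℝ) * 2 ^ d * δ) * c1 * g y') y ∂volume := by
              apply lintegral_mono
              intro y
              show g y * volume (slice d δ y)
                ≤ (ball (0 : EuclideanSpace ℝ (Fin d)) 2).indicator
                    (fun y' => ENNReal.ofReal ((d : ℝ) * 2 ^ d * δ) * c1 * g y') y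
              by_cases hy : y ∈ ball (0 : EuclideanSpace ℝ (Fin d)) 2
              · rw [Set.indicator_of_mem hy]
                calc g y * volume (slice d δ y)
                    ≤ g y * (ENNReal.ofReal ((d : ℝ) * 2 ^ d * δ) * c1) :=
                      mul_le_mul_right (slice_bound hd2 hδ hδ' y) _
                  _ = ENNReal.ofReal ((d : ℝ) * 2 ^ d * δ) * c1 * g y := by ring
              · rw [Set.indicator_of_notMem hy]
                have h2y : 2 ≤ ‖y‖ := by
                  rw [mem_ball_zero_iff, not_lt] at hy; exact hy
                rw [slice_empty hδ hδ' h2y]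
                simp
          _ = ∫⁻ y in ball (0 : EuclideanSpace ℝ (Fin d)) 2,
                ENNReal.ofReal ((d : ℝ) * 2 ^ d * δ) * c1 * g y ∂volume :=
              lintegral_indicator measurableSet_ball _
          _ = ENNReal.ofReal ((d : ℝ) * 2 ^ d * δ) * c1 *
                ∫⁻ y in ball (0 : EuclideanSpace ℝ (Fin d)) 2, g y ∂volume :=
              lintegral_const_mul' _ _
                (ENNReal.mul_ne_top ENNReal.ofReal_ne_top measure_ball_lt_top.ne)
          _ ≤ ENNReal.ofReal ((d : ℝ) * 2 ^ d * δ) * c1 *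
                ∫⁻ v in ball (0 : EuclideanSpace ℝ (Fin d)) 3,
                  (‖f (x + v)‖₊ : ℝ≥0∞) ^ p ∂volume := by
              apply mul_le_mul_right
              have htrans : (∫⁻ y in ball (0 : EuclideanSpace ℝ (Fin d)) 2, g y ∂volume)
                  = ∫⁻ v in (fun y => u + y) '' ball (0 : EuclideanSpace ℝ (Fin d)) 2,
                      (‖f (x + v)‖₊ : ℝ≥0∞) ^ p ∂volume := by
                have hle := (measurePreserving_add_left volume u).setLIntegral_comp_emb
                    (MeasurableEquiv.addLeft u).measurableEmbedding
                    (fun v => (‖f (x + v)‖₊ : ℝ≥0∞) ^ p)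
                    (ball (0 : EuclideanSpace ℝ (Fin d)) 2)
                rw [← hle]
                refine lintegral_congr fun y => ?_
                simp only [hg]
                rw [add_assoc]
              calc (∫⁻ y in ball (0 : EuclideanSpace ℝ (Fin d)) 2, g y ∂volume)
                  = ∫⁻ v in (fun y => u + y) '' ball (0 : EuclideanSpace ℝ (Fin d)) 2,
                      (‖f (x + v)‖₊ : ℝ≥0∞) ^ p ∂volume := htrans
                _ ≤ ∫⁻ v in ball (0 : EuclideanSpace ℝ (Fin d)) 3,
                      (‖f (x + v)‖₊ : ℝ≥0∞) ^ p ∂volume := by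
                    apply lintegral_mono_set
                    rintro v ⟨y, hy, rfl⟩
                    rw [mem_ball_zero_iff] at hy ⊢
                    calc ‖u + y‖ ≤ ‖u‖ + ‖y‖ := norm_add_le _ _
                      _ < 3 := by rw [hu1]; linarith
      calc (ENNReal.ofReal δ)⁻¹
            * ∫⁻ w in annulus2 d δ, (‖f (x + u + fstPart w)‖₊ : ℝ≥0∞) ^ p ∂volume
          = (ENNReal.ofReal δ)⁻¹ * ∫⁻ y, g y * volume (slice d δ y) ∂volume := by rw [hA]
        _ ≤ (ENNReal.ofReal δ)⁻¹ * (ENNReal.ofReal ((d : ℝ) * 2 ^ d * δ) * c1 *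
              ∫⁻ v in ball (0 : EuclideanSpace ℝ (Fin d)) 3,
                (‖f (x + v)‖₊ : ℝ≥0∞) ^ p ∂volume) := mul_le_mul_right hcore _
        _ = ENNReal.ofReal ((d : ℝ) * 2 ^ d) * c1 *
              ∫⁻ v in ball (0 : EuclideanSpace ℝ (Fin d)) 3,
                (‖f (x + v)‖₊ : ℝ≥0∞) ^ p ∂volume := by
            have hsplit : ENNReal.ofReal ((d : ℝ) * 2 ^ d * δ)
                = ENNReal.ofReal ((d : ℝ) * 2 ^ d) * ENNReal.ofReal δ :=
              ENNReal.ofReal_mul (by positivity)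
            have hcan : (ENNReal.ofReal δ)⁻¹ * ENNReal.ofReal δ = 1 :=
              ENNReal.inv_mul_cancel hδne ENNReal.ofReal_ne_top
            rw [hsplit]
            calc (ENNReal.ofReal δ)⁻¹ * (ENNReal.ofReal ((d : ℝ) * 2 ^ d)
                  * ENNReal.ofReal δ * c1 *
                  ∫⁻ v in ball (0 : EuclideanSpace ℝ (Fin d)) 3,
                    (‖f (x + v)‖₊ : ℝ≥0∞) ^ p ∂volume)
                = ((ENNReal.ofReal δ)⁻¹ * ENNReal.ofReal δ)
                    * (ENNReal.ofReal ((d : ℝ) * 2 ^ d) * c1 *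
                      ∫⁻ v in ball (0 : EuclideanSpace ℝ (Fin d)) 3,
                        (‖f (x + v)‖₊ : ℝ≥0∞) ^ p ∂volume) := by ring
              _ = ENNReal.ofReal ((d : ℝ) * 2 ^ d) * c1 *
                      ∫⁻ v in ball (0 : EuclideanSpace ℝ (Fin d)) 3,
                        (‖f (x + v)‖₊ : ℝ≥0∞) ^ p ∂volume := by rw [hcan, one_mul]
    calc ∫⁻ x, slicedMax δ p f x ^ p ∂volume
        ≤ ∫⁻ x, ENNReal.ofReal ((d : ℝ) * 2 ^ d) * c1 *
            ∫⁻ v in ball (0 : EuclideanSpace ℝ (Fin d)) 3,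
              (‖f (x + v)‖₊ : ℝ≥0∞) ^ p ∂volume ∂volume := lintegral_mono hpt
      _ = ENNReal.ofReal ((d : ℝ) * 2 ^ d) * c1 *
            ∫⁻ x, ∫⁻ v in ball (0 : EuclideanSpace ℝ (Fin d)) 3,
              (‖f (x + v)‖₊ : ℝ≥0∞) ^ p ∂volume ∂volume :=
          lintegral_const_mul' _ _
            (ENNReal.mul_ne_top ENNReal.ofReal_ne_top measure_ball_lt_top.ne)
      _ = ENNReal.ofReal ((d : ℝ) * 2 ^ d) * c1 * (c3 * I) := by
          congr 1
          exact swap_gen (ball (0 : EuclideanSpace ℝ (Fin d)) 3) measurableSet_ball _ hh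
            (fun v => v) measurable_id
      _ = ENNReal.ofReal ((d : ℝ) * 2 ^ d) * c1 * c3 * I := by ring

end
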